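/- Let D be a real d×n matrix with all columns nonzero and let μ(D) denote its mutual coherence. Suppose α ∈ ℝ^n satisfies ‖α‖₀ < (1/2)(1 + 1/μ(D)). Then α is the unique sparsest solution of the linear system x = Dα: for every β ∈ ℝ^n with Dβ = Dα and β ≠ α, one has ‖β‖₀ > ‖α‖₀. -/

import Mathlib

open Matrix

/-- The Euclidean norm of the `i`-th column of a matrix. -/
noncomputable def colNorm {m n : ℕ} (M : Matrix (Fin m) (Fin n) ℝ) (i : Fin n) : ℝ :=
  Real.sqrt (∑ k, M k i ^ 2)

/-- The mutual coherence of a matrix: the largest absolute normalized inner product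
between distinct columns. -/
noncomputable def mutualCoherence {m n : ℕ} (M : Matrix (Fin m) (Fin n) ℝ) : ℝ :=
  sSup {x : ℝ | ∃ i j : Fin n, i ≠ j ∧
    x = |∑ k, M k i * M k j| / (colNorm M i * colNorm M j)}

/-- The ℓ₀-"norm": the number of nonzero entries of a vector. -/
noncomputable def l0norm {n : ℕ} (v : Fin n → ℝ) : ℕ := {i | v i ≠ 0}.ncard

lemma colNorm_nonneg {m n : ℕ} (M : Matrix (Fin m) (Fin n) ℝ) (i : Fin n) :
    0 ≤ colNorm M i := Real.sqrt_nonneg _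

lemma sq_colNorm {m n : ℕ} (M : Matrix (Fin m) (Fin n) ℝ) (i : Fin n) :
    colNorm M i ^ 2 = ∑ k, M k i ^ 2 :=
  Real.sq_sqrt (Finset.sum_nonneg fun k _ => sq_nonneg _)

lemma colNorm_pos {m n : ℕ} (M : Matrix (Fin m) (Fin n) ℝ) (i : Fin n)
    (h : ∃ j, M j i ≠ 0) : 0 < colNorm M i := by
  obtain ⟨j, hj⟩ := h
  have h2 : 0 < colNorm M i ^ 2 := by
    rw [sq_colNorm]
    exact Finset.sum_pos' (fun k _ => sq_nonneg _)
      ⟨j, Finset.mem_univ j, by positivity⟩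
  nlinarith [colNorm_nonneg M i]

/-- Cauchy–Schwarz: each element of the coherence set is at most 1. -/
lemma coh_bddAbove {m n : ℕ} (M : Matrix (Fin m) (Fin n) ℝ) :
    BddAbove {x : ℝ | ∃ i j : Fin n, i ≠ j ∧
      x = |∑ k, M k i * M k j| / (colNorm M i * colNorm M j)} := by
  refine ⟨1, fun x hx => ?_⟩
  obtain ⟨i, j, hij, rfl⟩ := hx
  have hcs : (∑ k, M k i * M k j) ^ 2 ≤ (∑ k, M k i ^ 2) * ∑ k, M k j ^ 2 :=
    Finset.sum_mul_sq_le_sq_mul_sq _ _ _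
  have habs : |∑ k, M k i * M k j| ≤ colNorm M i * colNorm M j := by
    have h1 : |∑ k, M k i * M k j| = Real.sqrt ((∑ k, M k i * M k j) ^ 2) :=
      (Real.sqrt_sq_eq_abs _).symm
    rw [h1, colNorm, colNorm, ← Real.sqrt_mul (Finset.sum_nonneg fun k _ => sq_nonneg _)]
    exact Real.sqrt_le_sqrt hcs
  rcases eq_or_lt_of_le (mul_nonneg (colNorm_nonneg M i) (colNorm_nonneg M j)) with h0 | h0
  · rw [← h0]; simp
  · rw [div_le_one h0]; exact habs

lemma coh_ge {m n : ℕ} (M : Matrix (Fin m) (Fin n) ℝ) {i j : Fin n} (hij : i ≠ j) :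
    |∑ k, M k i * M k j| / (colNorm M i * colNorm M j) ≤ mutualCoherence M :=
  le_csSup (coh_bddAbove M) ⟨i, j, hij, rfl⟩

lemma coh_nonneg {m n : ℕ} (M : Matrix (Fin m) (Fin n) ℝ) {i j : Fin n} (hij : i ≠ j) :
    0 ≤ mutualCoherence M := by
  refine le_trans ?_ (coh_ge M hij)
  exact div_nonneg (abs_nonneg _) (mul_nonneg (colNorm_nonneg M i) (colNorm_nonneg M j))

lemma coh_bound {m n : ℕ} (M : Matrix (Fin m) (Fin n) ℝ)
    (hcols : ∀ i : Fin n, ∃ j, M j i ≠ 0) {i j : Fin n} (hij : i ≠ j) :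
    |∑ k, M k i * M k j| ≤ mutualCoherence M * (colNorm M i * colNorm M j) := by
  have hpos : 0 < colNorm M i * colNorm M j :=
    mul_pos (colNorm_pos M i (hcols i)) (colNorm_pos M j (hcols j))
  have := coh_ge M hij
  rw [div_le_iff₀ hpos] at this
  linarith

lemma l0norm_eq_card {n : ℕ} (v : Fin n → ℝ) :
    l0norm v = (Finset.univ.filter (fun i => v i ≠ 0)).card := by
  rw [l0norm, ← Set.ncard_coe_finset]
  congr 1
  ext i
  simp

/-- if `‖α‖₀ < (1/2)(1 + 1/μ(D))` then `α` is the unique sparsest solution of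
the system `x = D α`. -/
theorem stmt_0 {d n : ℕ} (D : Matrix (Fin d) (Fin n) ℝ)
    (hcols : ∀ i : Fin n, ∃ j, D j i ≠ 0)
    (α : Fin n → ℝ)
    (hα : (l0norm α : ℝ) < (1 / 2) * (1 + 1 / mutualCoherence D)) :
    ∀ β : Fin n → ℝ, D.mulVec β = D.mulVec α → β ≠ α → l0norm α < l0norm β := by
  intro β hDβ hβα
  set μ := mutualCoherence D with hμdef
  set γ : Fin n → ℝ := β - α with hγdef
  have hγ0 : D.mulVec γ = 0 := by
    rw [hγdef, Matrix.mulVec_sub, hDβ, sub_self]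
  have hγne : γ ≠ 0 := sub_ne_zero_of_ne hβα
  -- the support of γ
  set S : Finset (Fin n) := Finset.univ.filter (fun i => γ i ≠ 0) with hSdef
  have hSne : S.Nonempty := by
    obtain ⟨i, hi⟩ := Function.ne_iff.mp hγne
    simp only [Pi.zero_apply] at hi
    exact ⟨i, by simp [hSdef, hi]⟩
  set N : Fin n → ℝ := colNorm D with hNdef
  have hNpos : ∀ i, 0 < N i := fun i => colNorm_pos D i (hcols i)
  -- pick the index maximizing |γ i| * N i
  obtain ⟨i₀, hi₀S, hi₀max⟩ := S.exists_max_image (fun i => |γ i| * N i) hSne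
  have hγi₀ : γ i₀ ≠ 0 := (Finset.mem_filter.mp hi₀S).2
  -- inner products of columns
  set G : Fin n → Fin n → ℝ := fun i j => ∑ k, D k i * D k j with hGdef
  -- key equation: ∑ j, γ j * G j i₀ = 0
  have hkey : ∑ j, γ j * G j i₀ = 0 := by
    have h1 : ∀ k, ∑ j, D k j * γ j = 0 := by
      intro k
      have := congrFun hγ0 k
      simpa [Matrix.mulVec, dotProduct] using this
    calc ∑ j, γ j * G j i₀ = ∑ j, ∑ k, D k i₀ * (D k j * γ j) := by
          apply Finset.sum_congr rfl
          intro j _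
          rw [hGdef, Finset.mul_sum]
          apply Finset.sum_congr rfl
          intro k _
          ring
      _ = ∑ k, D k i₀ * (∑ j, D k j * γ j) := by
          rw [Finset.sum_comm]
          simp [Finset.mul_sum]
      _ = 0 := by simp [h1]
  -- restrict to support
  have hkeyS : ∑ j ∈ S, γ j * G j i₀ = 0 := by
    rw [← hkey]
    apply Finset.sum_subset (Finset.subset_univ S)
    intro j _ hjS
    have : γ j = 0 := by
      by_contra h
      exact hjS (by simp [hSdef, h])
    simp [this]
  have hsplit : γ i₀ * G i₀ i₀ = -∑ j ∈ S.erase i₀, γ j * G j i₀ := by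
    have h := Finset.add_sum_erase S (fun j => γ j * G j i₀) hi₀S
    beta_reduce at h
    rw [hkeyS] at h
    linarith
  have hGi₀ : G i₀ i₀ = N i₀ ^ 2 := by
    rw [hGdef, hNdef, sq_colNorm]
    simp [sq]
  -- case: support is a singleton
  rcases (S.erase i₀).eq_empty_or_nonempty with herase | herase
  · exfalso
    rw [herase, Finset.sum_empty, neg_zero, hGi₀] at hsplit
    have := hNpos i₀
    have : γ i₀ = 0 := by
      have h2 : N i₀ ^ 2 ≠ 0 := by positivity
      exact (mul_eq_zero.mp hsplit).resolve_right h2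
    exact hγi₀ this
  · -- there is another support element, hence n ≥ 2 pairs exist
    obtain ⟨j₁, hj₁⟩ := herase
    have hj₁ne : j₁ ≠ i₀ := (Finset.mem_erase.mp hj₁).1
    have hμ0 : 0 ≤ μ := coh_nonneg D hj₁ne
    set s : ℕ := S.card with hsdef
    -- the chain of inequalities
    have hmain : |γ i₀| * N i₀ ^ 2 ≤ ((s : ℝ) - 1) * μ * (|γ i₀| * N i₀) * N i₀ := by
      have h1 : |γ i₀| * N i₀ ^ 2 = |γ i₀ * G i₀ i₀| := by
        rw [hGi₀, abs_mul, abs_of_nonneg (by positivity : (0:ℝ) ≤ N i₀ ^ 2)]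
      rw [h1, hsplit, abs_neg]
      calc |∑ j ∈ S.erase i₀, γ j * G j i₀|
          ≤ ∑ j ∈ S.erase i₀, |γ j * G j i₀| := Finset.abs_sum_le_sum_abs _ _
        _ ≤ ∑ j ∈ S.erase i₀, μ * (|γ i₀| * N i₀) * N i₀ := by
            apply Finset.sum_le_sum
            intro j hj
            have hjne : j ≠ i₀ := (Finset.mem_erase.mp hj).1
            have hjS : j ∈ S := (Finset.mem_erase.mp hj).2
            have hGb : |G j i₀| ≤ μ * (N j * N i₀) := coh_bound D hcols hjne
            have hmax : |γ j| * N j ≤ |γ i₀| * N i₀ := hi₀max j hjS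
            have hNi₀ := (hNpos i₀).le
            have hNj := (hNpos j).le
            rw [abs_mul]
            calc |γ j| * |G j i₀| ≤ |γ j| * (μ * (N j * N i₀)) := by
                  exact mul_le_mul_of_nonneg_left hGb (abs_nonneg _)
              _ = μ * (|γ j| * N j) * N i₀ := by ring
              _ ≤ μ * (|γ i₀| * N i₀) * N i₀ := by
                  apply mul_le_mul_of_nonneg_right _ hNi₀
                  exact mul_le_mul_of_nonneg_left hmax hμ0
        _ = ((S.erase i₀).card : ℝ) * (μ * (|γ i₀| * N i₀) * N i₀) := by
            rw [Finset.sum_const, nsmul_eq_mul]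
        _ = ((s : ℝ) - 1) * μ * (|γ i₀| * N i₀) * N i₀ := by
            rw [Finset.card_erase_of_mem hi₀S]
            have hs1 : 1 ≤ s := Finset.card_pos.mpr hSne
            rw [← hsdef]
            push_cast [hs1]
            ring
    -- divide to get 1 ≤ (s-1) μ
    have hpos : 0 < |γ i₀| * N i₀ ^ 2 := by
      have := hNpos i₀
      have := abs_pos.mpr hγi₀
      positivity
    have hs1μ : 1 ≤ ((s : ℝ) - 1) * μ := by
      have h2 : |γ i₀| * N i₀ ^ 2 ≤ ((s : ℝ) - 1) * μ * (|γ i₀| * N i₀ ^ 2) := by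
        calc |γ i₀| * N i₀ ^ 2 ≤ ((s : ℝ) - 1) * μ * (|γ i₀| * N i₀) * N i₀ := hmain
          _ = ((s : ℝ) - 1) * μ * (|γ i₀| * N i₀ ^ 2) := by ring
      nlinarith
    have hμpos : 0 < μ := by
      rcases hμ0.lt_or_eq with h | h
      · exact h
      · exfalso; rw [← h] at hs1μ; simp at hs1μ; linarith
    -- spark bound: s ≥ 1 + 1/μ
    have hspark : 1 + 1 / μ ≤ (s : ℝ) := by
      have h3 : 1 / μ ≤ (s : ℝ) - 1 := by
        rw [div_le_iff₀ hμpos]; linarith [hs1μ]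
      linarith
    -- support counting: s ≤ l0 α + l0 β
    have hsupp : (s : ℝ) ≤ (l0norm α : ℝ) + (l0norm β : ℝ) := by
      have hsub : S ⊆ (Finset.univ.filter (fun i => α i ≠ 0)) ∪
          (Finset.univ.filter (fun i => β i ≠ 0)) := by
        intro i hi
        have hγi : γ i ≠ 0 := (Finset.mem_filter.mp hi).2
        simp only [Finset.mem_union, Finset.mem_filter, Finset.mem_univ, true_and]
        by_contra h
        push_neg at h
        apply hγi
        simp [hγdef, h.1, h.2]
      have := Finset.card_le_card hsub
      have := Finset.card_union_le (Finset.univ.filter (fun i => α i ≠ 0))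
        (Finset.univ.filter (fun i => β i ≠ 0))
      rw [l0norm_eq_card, l0norm_eq_card]
      push_cast
      have : s ≤ (Finset.univ.filter (fun i => α i ≠ 0)).card +
          (Finset.univ.filter (fun i => β i ≠ 0)).card := by omega
      exact_mod_cast this
    -- conclude
    have : (l0norm α : ℝ) < (l0norm β : ℝ) := by
      have h2 : 2 * (l0norm α : ℝ) < 1 + 1 / μ := by linarith
      linarith
    exact_mod_cast this
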